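/- arXiv:2602.11967 — 2 statements merged into one kernel-verified Lean document; each statement's English description precedes it below -/
import Mathlib

section
/- Consider the optimization problem: minimize (a + n·b)/(A + n·B) over A, B > 0, 0 < a ≤ A, 0 < b ≤ B, subject to a·b^n ≥ ((n-1)/n)·A·B^n, where n ≥ 2 is an integer. The infimum of this problem equals (n-1)/n. -/
open Set

/-- the infimum of `(a + n·b)/(A + n·B)` over `A, B > 0`,
`0 < a ≤ A`, `0 < b ≤ B` subject to `a·bⁿ ≥ ((n-1)/n)·A·Bⁿ` equals `(n-1)/n`
for every integer `n ≥ 2`. -/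
theorem nash_ratio_infimum (n : ℕ) (hn : 2 ≤ n) :
    sInf {r : ℝ | ∃ A B a b : ℝ, 0 < A ∧ 0 < B ∧ 0 < a ∧ a ≤ A ∧ 0 < b ∧ b ≤ B ∧
        ((n : ℝ) - 1) / n * A * B ^ n ≤ a * b ^ n ∧
        r = (a + n * b) / (A + n * B)} = ((n : ℝ) - 1) / n := by
  set S := {r : ℝ | ∃ A B a b : ℝ, 0 < A ∧ 0 < B ∧ 0 < a ∧ a ≤ A ∧ 0 < b ∧ b ≤ B ∧
        ((n : ℝ) - 1) / n * A * B ^ n ≤ a * b ^ n ∧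
        r = (a + n * b) / (A + n * B)} with hS
  have hn' : (2 : ℝ) ≤ (n : ℝ) := by exact_mod_cast hn
  have hnpos : (0 : ℝ) < n := by linarith
  set c : ℝ := ((n : ℝ) - 1) / n with hc
  have hcpos : 0 < c := div_pos (by linarith) hnpos
  have hc1 : c ≤ 1 := by
    rw [hc, div_le_one hnpos]; linarith
  have hnc : (n : ℝ) * c = (n : ℝ) - 1 := by
    rw [hc]; field_simp
  -- lower bound
  have hlb : ∀ r ∈ S, c ≤ r := by
    rintro r ⟨A, B, a, b, hA, hB, ha, haA, hb, hbB, hcon, rfl⟩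
    have hBn : (0:ℝ) < B ^ n := by positivity
    have hden : (0:ℝ) < A + n * B := by positivity
    -- a ≥ c A
    have hbn : b ^ n ≤ B ^ n := pow_le_pow_left₀ hb.le hbB n
    have h1 : c * A ≤ a := by
      have : c * A * B ^ n ≤ a * B ^ n := le_trans hcon
        (by nlinarith [ha.le])
      exact le_of_mul_le_mul_right this hBn
    -- b ≥ c B
    have h2 : c * B ≤ b := by
      have hA' : c * A * B ^ n ≤ A * b ^ n := le_trans hcon (by nlinarith [pow_pos hb n])
      have hcbn : c * B ^ n ≤ b ^ n := by
        have h2 : A * (c * B ^ n) ≤ A * b ^ n := by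
          rw [show A * (c * B ^ n) = c * A * B ^ n from by ring]; exact hA'
        exact le_of_mul_le_mul_left h2 hA
      obtain ⟨m, rfl⟩ : ∃ m, n = m + 1 := ⟨n - 1, by omega⟩
      have hBm : (0:ℝ) < B ^ m := by positivity
      have hbm : b ^ m ≤ B ^ m := pow_le_pow_left₀ hb.le hbB m
      have : c * B * B ^ m ≤ b * B ^ m := by
        have hbn' : b ^ (m + 1) ≤ b * B ^ m := by
          rw [pow_succ']
          nlinarith
        calc c * B * B ^ m = c * B ^ (m + 1) := by ring
          _ ≤ b ^ (m + 1) := hcbn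
          _ ≤ b * B ^ m := hbn'
      exact le_of_mul_le_mul_right this hBm
    rw [le_div_iff₀ hden]
    nlinarith [mul_le_mul_of_nonneg_left h2 hnpos.le]
  have hne : S.Nonempty := by
    refine ⟨1, 1, 1, 1, 1, one_pos, one_pos, one_pos, le_refl _, one_pos, le_refl _, ?_, ?_⟩
    · simp only [one_pow, mul_one]; linarith
    · rw [div_self (by positivity)]
  have hbdd : BddBelow S := ⟨c, hlb⟩
  apply le_antisymm
  · rw [Real.sInf_le_iff hbdd hne]
    intro ε hε
    set A : ℝ := max 1 (1/ε) with hA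
    have hA1 : (1:ℝ) ≤ A := le_max_left _ _
    have hApos : (0:ℝ) < A := by linarith
    have hAε : 1/ε ≤ A := le_max_right _ _
    refine ⟨(c * A + n * 1) / (A + n * 1), ⟨A, 1, c * A, 1, hApos, one_pos,
      by positivity, by nlinarith, one_pos, le_refl _, by simp [hc], rfl⟩, ?_⟩
    have hden : (0:ℝ) < A + n * 1 := by positivity
    rw [div_lt_iff₀ hden]
    have h1 : 1 ≤ A * ε := (div_le_iff₀ hε).mp hAε
    nlinarith [hnc, mul_pos hε hnpos]
  · exact le_csInf hne hlb
end

section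
/- For ℓ, p with 0 < ℓ ≤ p < 1, define r(ℓ,p) = (p·ln p - ln ℓ)/(ℓ·ln p - ln ℓ). Then r(ℓ,p) ∈ (0,1] and the infimum of r over 0 < ℓ ≤ p < 1 is at most 0.8532; in particular, at ℓ = 0.325268 and p = 0.589198 one has r(ℓ,p) < 0.8533. -/
open Set

/-- The revenue approximation ratio of the best single posted price in the hard
quasi-regular instance with parameters `ℓ ≤ p`. -/
noncomputable def hardRatio (ℓ p : ℝ) : ℝ :=
  (p * Real.log p - Real.log ℓ) / (ℓ * Real.log p - Real.log ℓ)

private lemma log_one_sub_bounds {x : ℝ} (h0 : 0 ≤ x) (h1 : x < 1) (n : ℕ) :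
    -(∑ i ∈ Finset.range n, x ^ (i + 1) / (i + 1)) - x ^ (n + 1) / (1 - x) ≤ Real.log (1 - x) ∧
    Real.log (1 - x) ≤ -(∑ i ∈ Finset.range n, x ^ (i + 1) / (i + 1)) + x ^ (n + 1) / (1 - x) := by
  have h := Real.abs_log_sub_add_sum_range_le (by rw [abs_of_nonneg h0]; exact h1) n
  rw [abs_of_nonneg h0] at h
  have h2 := abs_le.1 h
  constructor <;> linarith [h2.1, h2.2]

private lemma part1 : ∀ ℓ p : ℝ, 0 < ℓ → ℓ ≤ p → p < 1 → hardRatio ℓ p ∈ Ioc (0:ℝ) 1 := by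
  intro ℓ p h0 hlp hp1
  have hp0 : 0 < p := lt_of_lt_of_le h0 hlp
  have hLp : Real.log p < 0 := Real.log_neg hp0 hp1
  have hLl : Real.log ℓ ≤ Real.log p := Real.log_le_log h0 hlp
  have hN : 0 < p * Real.log p - Real.log ℓ := by nlinarith
  have hD : p * Real.log p - Real.log ℓ ≤ ℓ * Real.log p - Real.log ℓ := by nlinarith
  have hDpos : 0 < ℓ * Real.log p - Real.log ℓ := lt_of_lt_of_le hN hD
  exact ⟨div_pos hN hDpos, div_le_one_of_le₀ hD hDpos.le⟩

/-- for all `0 < ℓ ≤ p < 1`, `r(ℓ,p) ∈ (0,1]`, the infimum of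
`r` over this region is at most `0.8532`, and at `ℓ = 0.325268`,
`p = 0.589198` one has `r(ℓ,p) < 0.8533`. -/
theorem hard_ratio_bounds :
    (∀ ℓ p : ℝ, 0 < ℓ → ℓ ≤ p → p < 1 → hardRatio ℓ p ∈ Ioc (0:ℝ) 1) ∧
    sInf {r : ℝ | ∃ ℓ p : ℝ, 0 < ℓ ∧ ℓ ≤ p ∧ p < 1 ∧ r = hardRatio ℓ p} ≤ 0.8532 ∧
    hardRatio 0.325268 0.589198 < 0.8533 := by
  refine ⟨part1, ?_, ?_⟩
  · -- sInf bound via ℓ = 0.936^17, p = 0.936^8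
    set ℓ0 : ℝ := (0.936:ℝ) ^ 17 with hℓ0
    set p0 : ℝ := (0.936:ℝ) ^ 8 with hp0
    have hq0 : (0:ℝ) < 0.936 := by norm_num
    have hmemc : 0 < ℓ0 ∧ ℓ0 ≤ p0 ∧ p0 < 1 := by
      refine ⟨by positivity, ?_, ?_⟩
      · exact pow_le_pow_of_le_one (by norm_num) (by norm_num) (by norm_num)
      · exact pow_lt_one₀ (by norm_num) (by norm_num) (by norm_num)
    have hmem : hardRatio ℓ0 p0 ∈
        {r : ℝ | ∃ ℓ p : ℝ, 0 < ℓ ∧ ℓ ≤ p ∧ p < 1 ∧ r = hardRatio ℓ p} :=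
      ⟨ℓ0, p0, hmemc.1, hmemc.2.1, hmemc.2.2, rfl⟩
    have hbdd : BddBelow {r : ℝ | ∃ ℓ p : ℝ, 0 < ℓ ∧ ℓ ≤ p ∧ p < 1 ∧ r = hardRatio ℓ p} := by
      refine ⟨0, fun r hr => ?_⟩
      obtain ⟨ℓ, p, h1, h2, h3, he⟩ := hr
      exact he ▸ (part1 ℓ p h1 h2 h3).1.le
    refine le_trans (csInf_le hbdd hmem) ?_
    -- compute hardRatio ℓ0 p0 as a rational
    have hL : Real.log (0.936:ℝ) < 0 := Real.log_neg (by norm_num) (by norm_num)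
    have h17 : Real.log ℓ0 = 17 * Real.log 0.936 := by
      rw [hℓ0, Real.log_pow]; norm_num
    have h8 : Real.log p0 = 8 * Real.log 0.936 := by
      rw [hp0, Real.log_pow]; norm_num
    have hnum : p0 * Real.log p0 - Real.log ℓ0 = (8 * p0 - 17) * Real.log 0.936 := by
      rw [h17, h8]; ring
    have hden : ℓ0 * Real.log p0 - Real.log ℓ0 = (8 * ℓ0 - 17) * Real.log 0.936 := by
      rw [h17, h8]; ring
    have heq : hardRatio ℓ0 p0 = (8 * p0 - 17) / (8 * ℓ0 - 17) := by
      unfold hardRatio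
      rw [hnum, hden, mul_div_mul_right _ _ hL.ne]
    rw [heq]
    have hdneg : 8 * ℓ0 - 17 < 0 := by
      have : ℓ0 ≤ 1 := pow_le_one₀ (by norm_num) (by norm_num)
      linarith
    rw [div_le_iff_of_neg hdneg]
    rw [hℓ0, hp0]
    norm_num
  · -- numerical bound at ℓ = 0.325268, p = 0.589198
    set Lp : ℝ := Real.log 0.589198 with hLp
    set Lt : ℝ := Real.log ((81317000000:ℝ) / 86788570801) with hLt
    set Ll : ℝ := Real.log 0.325268 with hLl
    -- series bounds for Lp
    have hp := log_one_sub_bounds (x := 0.410802) (by norm_num) (by norm_num) 13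
    have e1 : (1:ℝ) - 0.410802 = 0.589198 := by norm_num
    rw [e1] at hp
    have hpub : Lp ≤ -0.528985 := by
      refine hp.2.trans ?_
      norm_num [Finset.sum_range_succ]
    have hplb : -0.5290 ≤ Lp := by
      refine le_trans ?_ hp.1
      norm_num [Finset.sum_range_succ]
    -- series bounds for Lt
    have ht := log_one_sub_bounds (x := (5471570801:ℝ) / 86788570801) (by norm_num)
      (by norm_num) 3
    have e2 : (1:ℝ) - (5471570801:ℝ) / 86788570801 = (81317000000:ℝ) / 86788570801 := by
      norm_num
    rw [e2] at ht
    have htub : Lt ≤ -0.06509 := by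
      refine ht.2.trans ?_
      norm_num [Finset.sum_range_succ]
    have htlb : -0.06514 ≤ Lt := by
      refine le_trans ?_ ht.1
      norm_num [Finset.sum_range_succ]
    -- split Ll
    have hsplit : Ll = 2 * Lp + Lt := by
      have e3 : (0.325268:ℝ) = 0.589198 ^ 2 * ((81317000000:ℝ) / 86788570801) := by
        norm_num
      rw [hLl, e3, Real.log_mul (by norm_num) (by norm_num), Real.log_pow]
      push_cast
      ring
    have hllb : -1.12314 ≤ Ll := by rw [hsplit]; linarith
    have hlub : Ll ≤ -1.1230 := by rw [hsplit]; linarith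
    -- assemble
    unfold hardRatio
    rw [← hLp, ← hLl]
    have hD : 0 < 0.325268 * Lp - Ll := by nlinarith
    rw [div_lt_iff₀ hD]
    nlinarith
end
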